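/- Let W = BSC(ε) with ε ∈ [0, 1/2) and V = BSC(1−ε). Then for every n and every sign sequence s ∈ {+,−}ⁿ with s ≠ ++…+, we have I(W^s, V^s) = I(W^s), and consequently (1/2ⁿ) Σ_{s∈{+,−}ⁿ} I(W^s, V^s)* ≥ I(W) − (1/2ⁿ)·1 → I(W) as n → ∞. -/

import Mathlib

open Finset Real

noncomputable section

/-- Binary symmetric channel with crossover probability `α`: `BSC α x y = W(y|x)`. -/
def BSC (α : ℝ) : Bool → Bool → ℝ := fun x y => if y = x then 1 - α else α

/-- Arıkan's minus polar transform. -/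
def Wminus {Y : Type*} (W : Bool → Y → ℝ) : Bool → Y × Y → ℝ :=
  fun u₁ y => ∑ u₂ : Bool, (1/2) * W (u₁ ^^ u₂) y.1 * W u₂ y.2

/-- Arıkan's plus polar transform; output `(y₁, y₂, u₁)`. -/
def Wplus {Y : Type*} (W : Bool → Y → ℝ) : Bool → Y × Y × Bool → ℝ :=
  fun u₂ y => (1/2) * W (y.2.2 ^^ u₂) y.1 * W u₂ y.2.1

/-- Mismatched information functional `I(W, V)`. -/
def Ifun {Y : Type*} [Fintype Y] (W V : Bool → Y → ℝ) : ℝ :=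
  ∑ y : Y, ∑ x : Bool, (1/2) * W x y *
    Real.logb 2 (V x y / ((1/2) * V false y + (1/2) * V true y))

/-- Output alphabet after applying a sequence of polar transforms
(`true` = plus, `false` = minus, head applied first). -/
def polarType (Y : Type u) : List Bool → Type u
  | [] => Y
  | true :: s => polarType (Y × Y × Bool) s
  | false :: s => polarType (Y × Y) s

/-- The synthesized channel `W^s`. -/
def polarChan {Y : Type*} (W : Bool → Y → ℝ) : (s : List Bool) → Bool → polarType Y s → ℝ
  | [] => W
  | true :: s => polarChan (Wplus W) s
  | false :: s => polarChan (Wminus W) s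

instance polarFintype (Y : Type*) [Fintype Y] : ∀ s : List Bool, Fintype (polarType Y s)
  | [] => inferInstanceAs (Fintype Y)
  | true :: s => polarFintype (Y × Y × Bool) s
  | false :: s => polarFintype (Y × Y) s


/-! ### Auxiliary development -/

/-- input-flipped channel -/
def flipC {Y : Type*} (W : Bool → Y → ℝ) : Bool → Y → ℝ := fun x y => W (!x) y

lemma wminus_flip {Y : Type*} (W : Bool → Y → ℝ) : Wminus (flipC W) = Wminus W := by
  funext u y
  simp only [Wminus, flipC, Fintype.sum_bool]
  cases u <;> simp <;> ring

lemma wplus_flip {Y : Type*} (W : Bool → Y → ℝ) : Wplus (flipC W) = flipC (Wplus W) := by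
  funext u y
  simp only [Wplus, flipC]
  cases u <;> cases y.2.2 <;> simp

lemma polar_flip {Y : Type*} : ∀ (s : List Bool) (W : Bool → Y → ℝ),
    s ≠ List.replicate s.length true → polarChan (flipC W) s = polarChan W s
  | [], W, h => absurd rfl h
  | false :: s, W, _ => by
      show polarChan (Wminus (flipC W)) s = polarChan (Wminus W) s
      rw [wminus_flip]
  | true :: s, W, h => by
      show polarChan (Wplus (flipC W)) s = polarChan (Wplus W) s
      rw [wplus_flip]
      exact polar_flip s (Wplus W) (by
        intro hs; apply h
        simp [List.length_cons, List.replicate_succ, ← hs])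

lemma bsc_flip (ε : ℝ) : BSC (1 - ε) = flipC (BSC ε) := by
  funext x y
  cases x <;> cases y <;> simp [BSC, flipC] <;> ring

section Chan
variable {Y : Type*} [Fintype Y]

/-- a proper channel -/
def ChanOK (W : Bool → Y → ℝ) : Prop := (∀ x y, 0 ≤ W x y) ∧ (∀ x, ∑ y, W x y = 1)

lemma prod_sum_eq (c : ℝ) (f g : Y → ℝ) :
    ∑ y₁ : Y, ∑ y₂ : Y, c * f y₁ * g y₂ = c * (∑ y, f y) * (∑ y, g y) := by
  rw [Finset.sum_comm]
  simp only [← Finset.sum_mul, ← Finset.mul_sum]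

lemma wminus_ok {W : Bool → Y → ℝ} (h : ChanOK W) : ChanOK (Wminus W) := by
  obtain ⟨h0, h1⟩ := h
  constructor
  · intro x y
    refine Finset.sum_nonneg fun u₂ _ => ?_
    have := h0 (x ^^ u₂) y.1; have := h0 u₂ y.2; positivity
  · intro x
    rw [Fintype.sum_prod_type]
    simp only [Wminus, Fintype.sum_bool]
    simp only [Finset.sum_add_distrib]
    rw [prod_sum_eq, prod_sum_eq]
    simp only [h1]
    norm_num

lemma wplus_ok {W : Bool → Y → ℝ} (h : ChanOK W) : ChanOK (Wplus W) := by
  obtain ⟨h0, h1⟩ := h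
  constructor
  · intro x y
    have := h0 (y.2.2 ^^ x) y.1; have := h0 x y.2.1
    simp only [Wplus]; positivity
  · intro x
    rw [Fintype.sum_prod_type]
    simp only [Wplus, Fintype.sum_prod_type, Fintype.sum_bool]
    simp only [Finset.sum_add_distrib]
    rw [prod_sum_eq, prod_sum_eq]
    simp only [h1]
    norm_num

lemma pt_low (a q : ℝ) (ha : 0 ≤ a) (hq : a/2 ≤ q) :
    (1/2*a - 1/2*q)/Real.log 2 ≤ 1/2 * a * Real.logb 2 (a / q) := by
  have hl2 : (0:ℝ) < Real.log 2 := Real.log_pos (by norm_num)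
  rcases eq_or_lt_of_le ha with h|h
  · rw [← h]
    have : (1/2*(0:ℝ) - 1/2*q)/Real.log 2 ≤ 0 :=
      div_nonpos_of_nonpos_of_nonneg (by rw [← h] at hq; linarith) hl2.le
    simpa using this
  · have hq' : 0 < q := lt_of_lt_of_le (by linarith) hq
    have hlog : Real.log (q/a) ≤ q/a - 1 := Real.log_le_sub_one_of_pos (by positivity)
    rw [Real.log_div hq'.ne' h.ne'] at hlog
    have hgoal : (1 - q/a) ≤ Real.log (a/q) := by
      rw [Real.log_div h.ne' hq'.ne']; linarith
    have key : 1/2*a - 1/2*q ≤ 1/2*a*Real.log (a/q) := by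
      have h2 : 1/2*a*(1 - q/a) ≤ 1/2*a*Real.log (a/q) :=
        mul_le_mul_of_nonneg_left hgoal (by positivity)
      have h3 : 1/2*a*(1 - q/a) = 1/2*a - 1/2*q := by field_simp
      linarith
    calc (1/2*a - 1/2*q)/Real.log 2 ≤ (1/2*a*Real.log (a/q))/Real.log 2 :=
          (div_le_div_iff_of_pos_right hl2).2 key
      _ = 1/2 * a * Real.logb 2 (a / q) := by rw [Real.logb]; ring

lemma pt_high (a q : ℝ) (ha : 0 ≤ a) (hq : a/2 ≤ q) :
    1/2 * a * Real.logb 2 (a / q) ≤ 1/2 * a := by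
  rcases eq_or_lt_of_le ha with h|h
  · rw [← h]; simp
  · have hq' : 0 < q := lt_of_lt_of_le (by linarith) hq
    have hr : a / q ≤ 2 := by rw [div_le_iff₀ hq']; linarith
    have : Real.logb 2 (a/q) ≤ Real.logb 2 2 :=
      Real.logb_le_logb_of_le (by norm_num) (by positivity) hr
    rw [Real.logb_self_eq_one (by norm_num)] at this
    nlinarith

variable {W : Bool → Y → ℝ}

lemma qsum (h : ChanOK W) : ∑ y : Y, ((1/2) * W false y + (1/2) * W true y) = 1 := by
  rw [Finset.sum_add_distrib, ← Finset.mul_sum, ← Finset.mul_sum, h.2, h.2]; norm_num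

lemma halfsum (h : ChanOK W) : ∑ y : Y, ∑ x : Bool, (1/2) * W x y = 1 := by
  rw [Finset.sum_comm, Fintype.sum_bool, ← Finset.mul_sum, ← Finset.mul_sum, h.2, h.2]
  norm_num

lemma half_le_q (h : ChanOK W) (x : Bool) (y : Y) :
    W x y / 2 ≤ (1/2) * W false y + (1/2) * W true y := by
  have := h.1 false y; have := h.1 true y
  cases x <;> linarith

lemma Ifun_nonneg (h : ChanOK W) : 0 ≤ Ifun W W := by
  have e : ∑ y : Y, ∑ x : Bool,
      (1/2 * W x y - 1/2 * ((1/2) * W false y + (1/2) * W true y)) = 0 := by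
    rw [Finset.sum_comm, Fintype.sum_bool, Finset.sum_sub_distrib, Finset.sum_sub_distrib]
    simp only [← Finset.mul_sum]
    rw [h.2, h.2, qsum h]
    norm_num
  calc (0:ℝ) = (∑ y : Y, ∑ x : Bool,
        (1/2 * W x y - 1/2 * ((1/2) * W false y + (1/2) * W true y)))/Real.log 2 := by
        rw [e, zero_div]
    _ = ∑ y : Y, ∑ x : Bool,
        (1/2 * W x y - 1/2 * ((1/2) * W false y + (1/2) * W true y))/Real.log 2 := by
        simp only [Finset.sum_div]
    _ ≤ Ifun W W := by
        refine Finset.sum_le_sum fun y _ => Finset.sum_le_sum fun x _ => ?_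
        exact pt_low _ _ (h.1 x y) (half_le_q h x y)

lemma Ifun_le_one (h : ChanOK W) : Ifun W W ≤ 1 := by
  calc Ifun W W ≤ ∑ y : Y, ∑ x : Bool, (1/2) * W x y := by
        refine Finset.sum_le_sum fun y _ => Finset.sum_le_sum fun x _ => ?_
        exact pt_high _ _ (h.1 x y) (half_le_q h x y)
    _ = 1 := halfsum h

lemma key (x y S c₁ c₂ : ℝ) (hx : 0 ≤ x) (hy : 0 ≤ y)
    (hS : 0 < x → 0 < y → 0 < S) (hc₁ : 0 < x → 0 < c₁) (hc₂ : 0 < y → 0 < c₂) :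
    x*y*(Real.logb 2 ((2*S)/(c₁*c₂)) + Real.logb 2 ((x*y/2)/S))
      = x*y*(Real.logb 2 (x/c₁) + Real.logb 2 (y/c₂)) := by
  rcases eq_or_lt_of_le hx with h|hx'
  · rw [← h]; ring
  rcases eq_or_lt_of_le hy with h|hy'
  · rw [← h]; ring
  have hS' := hS hx' hy'; have h1 := hc₁ hx'; have h2 := hc₂ hy'
  have e : (2*S)/(c₁*c₂) * ((x*y/2)/S) = (x/c₁)*(y/c₂) := by field_simp
  rw [← Real.logb_mul (by positivity : (0:ℝ) < (2*S)/(c₁*c₂)).ne'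
      (by positivity : (0:ℝ) < (x*y/2)/S).ne', e,
      Real.logb_mul (by positivity : (0:ℝ) < x/c₁).ne' (by positivity : (0:ℝ) < y/c₂).ne']

set_option maxHeartbeats 2000000 in
lemma chain (h : ChanOK W) :
    Ifun (Wminus W) (Wminus W) + Ifun (Wplus W) (Wplus W) = 2 * Ifun W W := by
  have h0 := h.1
  have e2 : ∀ f g : Y → ℝ, (∑ y, g y = 1) →
      ∑ y₁ : Y, ∑ y₂ : Y, (g y₂ * f y₁ + g y₁ * f y₂) = 2 * ∑ y, f y := by
    intro f g hg
    simp only [Finset.sum_add_distrib]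
    simp only [← Finset.sum_mul, ← Finset.mul_sum]
    rw [hg]; ring
  have hR := e2 (fun y => ∑ x : Bool, (1/2) * W x y *
        Real.logb 2 (W x y / ((1/2) * W false y + (1/2) * W true y)))
      (fun y => (1/2) * W false y + (1/2) * W true y) (qsum h)
  have hRI : 2 * Ifun W W = ∑ y₁ : Y, ∑ y₂ : Y,
      (((1/2) * W false y₂ + (1/2) * W true y₂) *
        (∑ x : Bool, (1/2) * W x y₁ *
          Real.logb 2 (W x y₁ / ((1/2) * W false y₁ + (1/2) * W true y₁))) +
       ((1/2) * W false y₁ + (1/2) * W true y₁) *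
        (∑ x : Bool, (1/2) * W x y₂ *
          Real.logb 2 (W x y₂ / ((1/2) * W false y₂ + (1/2) * W true y₂)))) := by
    exact hR.symm
  rw [hRI]
  simp only [Ifun, Fintype.sum_prod_type]
  rw [← Finset.sum_add_distrib]
  refine Finset.sum_congr rfl fun y₁ _ => ?_
  rw [← Finset.sum_add_distrib]
  refine Finset.sum_congr rfl fun y₂ _ => ?_
  simp only [Wminus, Wplus, Fintype.sum_bool, Bool.xor_true, Bool.xor_false, Bool.not_true,
    Bool.not_false]
  have k1 := key (W false y₁) (W false y₂)
      (1/4 * W false y₁ * W false y₂ + 1/4 * W true y₁ * W true y₂)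
      ((1/2) * W false y₁ + (1/2) * W true y₁) ((1/2) * W false y₂ + (1/2) * W true y₂)
      (h0 false y₁) (h0 false y₂)
      (fun hx hy => by nlinarith [h0 true y₁, h0 true y₂])
      (fun hx => by nlinarith [h0 true y₁]) (fun hy => by nlinarith [h0 true y₂])
  have k2 := key (W true y₁) (W true y₂)
      (1/4 * W false y₁ * W false y₂ + 1/4 * W true y₁ * W true y₂)
      ((1/2) * W false y₁ + (1/2) * W true y₁) ((1/2) * W false y₂ + (1/2) * W true y₂)
      (h0 true y₁) (h0 true y₂)
      (fun hx hy => by nlinarith [h0 false y₁, h0 false y₂])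
      (fun hx => by nlinarith [h0 false y₁]) (fun hy => by nlinarith [h0 false y₂])
  have k3 := key (W true y₁) (W false y₂)
      (1/4 * W true y₁ * W false y₂ + 1/4 * W false y₁ * W true y₂)
      ((1/2) * W false y₁ + (1/2) * W true y₁) ((1/2) * W false y₂ + (1/2) * W true y₂)
      (h0 true y₁) (h0 false y₂)
      (fun hx hy => by nlinarith [h0 false y₁, h0 true y₂])
      (fun hx => by nlinarith [h0 false y₁]) (fun hy => by nlinarith [h0 true y₂])
  have k4 := key (W false y₁) (W true y₂)
      (1/4 * W true y₁ * W false y₂ + 1/4 * W false y₁ * W true y₂)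
      ((1/2) * W false y₁ + (1/2) * W true y₁) ((1/2) * W false y₂ + (1/2) * W true y₂)
      (h0 false y₁) (h0 true y₂)
      (fun hx hy => by nlinarith [h0 true y₁, h0 false y₂])
      (fun hx => by nlinarith [h0 true y₁]) (fun hy => by nlinarith [h0 false y₂])
  ring_nf at k1 k2 k3 k4 ⊢
  linear_combination (1/4) * k1 + (1/4) * k2 + (1/4) * k3 + (1/4) * k4

end Chan

lemma polar_ok : ∀ (s : List Bool) {Y : Type*} [Fintype Y] (W : Bool → Y → ℝ),
    ChanOK W → ChanOK (polarChan W s)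
  | [], _, _, _, h => h
  | false :: s, _, _, W, h => polar_ok s (Wminus W) (wminus_ok h)
  | true :: s, _, _, W, h => polar_ok s (Wplus W) (wplus_ok h)

/-- matched information of a synthesized channel -/
def IW {Y : Type*} [Fintype Y] (W : Bool → Y → ℝ) (l : List Bool) : ℝ :=
  Ifun (polarChan W l) (polarChan W l)

lemma IW_cons_true {Y : Type*} [Fintype Y] (W : Bool → Y → ℝ) (l : List Bool) :
    IW W (true :: l) = IW (Wplus W) l := rfl

lemma IW_cons_false {Y : Type*} [Fintype Y] (W : Bool → Y → ℝ) (l : List Bool) :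
    IW W (false :: l) = IW (Wminus W) l := rfl

lemma conserve (n : ℕ) : ∀ {Y : Type} [Fintype Y] (W : Bool → Y → ℝ), ChanOK W →
    (∑ s : Fin n → Bool, IW W (List.ofFn s)) = 2^n * Ifun W W := by
  induction n with
  | zero =>
    intro Y _ W h
    simp [List.ofFn_zero, IW, polarChan]
    rw [List.ofFn_zero]; rfl
  | succ n ih =>
    intro Y _ W h
    rw [← Equiv.sum_comp (Fin.consEquiv fun _ : Fin (n+1) => Bool)
      (fun s => IW W (List.ofFn s))]
    rw [Fintype.sum_prod_type, Fintype.sum_bool]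
    have hofFn : ∀ (b : Bool) (t : Fin n → Bool),
        List.ofFn ((Fin.consEquiv fun _ : Fin (n+1) => Bool) (b, t)) = b :: List.ofFn t := by
      intro b t
      rw [List.ofFn_succ]
      simp [Fin.consEquiv]
    simp only [hofFn, IW_cons_true, IW_cons_false]
    rw [ih (Wplus W) (wplus_ok h), ih (Wminus W) (wminus_ok h)]
    have hc := chain h
    rw [show ((2:ℝ))^(n+1) * Ifun W W = 2^n *
      (Ifun (Wminus W) (Wminus W) + Ifun (Wplus W) (Wplus W)) by rw [hc]; ring]
    ring

lemma bsc_ok {ε : ℝ} (h0 : 0 ≤ ε) (h1 : ε ≤ 1) : ChanOK (BSC ε) := by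
  constructor
  · intro x y; cases x <;> cases y <;> simp [BSC] <;> linarith
  · intro x; rw [Fintype.sum_bool]; cases x <;> simp [BSC] <;> ring


/-- for `W = BSC ε` (`ε ∈ [0,1/2)`) and `V = BSC (1-ε)`,
`I(W^s, V^s) = I(W^s)` for every sign sequence `s` other than all-plus, and hence
the averaged positive parts are at least `I(W) - 2⁻ⁿ`. -/
theorem bsc_mismatched_polar_rate_bound (ε : ℝ) (hε : ε ∈ Set.Ico (0:ℝ) (1/2)) :
    (∀ s : List Bool, s ≠ List.replicate s.length true →
      Ifun (polarChan (BSC ε) s) (polarChan (BSC (1 - ε)) s) =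
        Ifun (polarChan (BSC ε) s) (polarChan (BSC ε) s)) ∧
    ∀ n : ℕ,
      (1/2)^n * ∑ s : Fin n → Bool,
          max (Ifun (polarChan (BSC ε) (List.ofFn s))
                    (polarChan (BSC (1 - ε)) (List.ofFn s))) 0
        ≥ Ifun (BSC ε) (BSC ε) - (1/2)^n := by
  obtain ⟨hε0, hε1⟩ := hε
  have hW : ChanOK (BSC ε) := bsc_ok hε0 (by linarith)
  have part1 : ∀ s : List Bool, s ≠ List.replicate s.length true →
      Ifun (polarChan (BSC ε) s) (polarChan (BSC (1 - ε)) s) =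
        Ifun (polarChan (BSC ε) s) (polarChan (BSC ε) s) := by
    intro s hs
    rw [bsc_flip, polar_flip s _ hs]
  refine ⟨part1, fun n => ?_⟩
  have hcons := conserve n (BSC ε) hW
  have hbound : ∀ s : Fin n → Bool,
      IW (BSC ε) (List.ofFn s)
        - (if s = (fun _ => true) then 1 else 0)
      ≤ max (Ifun (polarChan (BSC ε) (List.ofFn s))
          (polarChan (BSC (1 - ε)) (List.ofFn s))) 0 := by
    intro s
    have hOK := polar_ok (List.ofFn s) (BSC ε) hW
    by_cases hs : s = fun _ => true
    · rw [if_pos hs]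
      have h1 : IW (BSC ε) (List.ofFn s) ≤ 1 := Ifun_le_one hOK
      calc IW (BSC ε) (List.ofFn s) - 1
          ≤ 0 := by linarith
        _ ≤ _ := le_max_right _ _
    · rw [if_neg hs]
      have hneq : List.ofFn s ≠ List.replicate (List.ofFn s).length true := by
        intro hEq
        apply hs
        rw [List.length_ofFn, ← List.ofFn_const n true, List.ofFn_inj] at hEq
        exact hEq
      rw [part1 _ hneq, sub_zero]
      exact le_max_left _ _
  have hsum : ∑ s : Fin n → Bool,
      (IW (BSC ε) (List.ofFn s)
        - (if s = (fun _ => true) then 1 else 0))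
      ≤ ∑ s : Fin n → Bool, max (Ifun (polarChan (BSC ε) (List.ofFn s))
          (polarChan (BSC (1 - ε)) (List.ofFn s))) 0 :=
    Finset.sum_le_sum fun s _ => hbound s
  rw [Finset.sum_sub_distrib, hcons] at hsum
  have hind : ∑ s : Fin n → Bool, (if s = (fun _ => true) then (1:ℝ) else 0) = 1 := by
    rw [Finset.sum_ite_eq' Finset.univ (fun _ => true) (fun _ => (1:ℝ))]
    simp
  rw [hind] at hsum
  have hp : ((1:ℝ)/2)^n * (2:ℝ)^n = 1 := by rw [← mul_pow]; norm_num
  have hpos : (0:ℝ) < (1/2)^n := by positivity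
  have := mul_le_mul_of_nonneg_left hsum hpos.le
  calc Ifun (BSC ε) (BSC ε) - (1/2)^n
      = (1/2)^n * (2^n * Ifun (BSC ε) (BSC ε) - 1) + (Ifun (BSC ε) (BSC ε) -
        ((1:ℝ)/2)^n * (2:ℝ)^n * Ifun (BSC ε) (BSC ε)) := by ring
    _ = (1/2)^n * (2^n * Ifun (BSC ε) (BSC ε) - 1) := by rw [hp]; ring
    _ ≤ (1/2)^n * ∑ s : Fin n → Bool,
          max (Ifun (polarChan (BSC ε) (List.ofFn s))
                    (polarChan (BSC (1 - ε)) (List.ofFn s))) 0 := this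

end
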